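/- Let ∼ be the equivalence relation on ℤ² generated by the following elementary relations: for each n with f_n = R and each m, (3m, n) ∼ (3m, n+1) and (3m+1, n) ∼ (3m+2, n+1); for each n with f_n = L and each m, (3m+1, n) ∼ (3m, n+1) and (3m+2, n) ∼ (3m+2, n+1). Then for all (m,n), (m',n') ∈ ℤ², Q_{m,n} = Q_{m',n'} if and only if (m,n) ∼ (m',n'). -/

import Mathlib

/-- The relators of the presentation ⟨A, B, C | A² = B² = C² = 1⟩. -/
def rels : Set (FreeGroup (Fin 3)) :=
  {FreeGroup.of 0 * FreeGroup.of 0, FreeGroup.of 1 * FreeGroup.of 1,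
   FreeGroup.of 2 * FreeGroup.of 2}

/-- `G` is the group ⟨A, B, C | A² = B² = C² = 1⟩, the free product of three copies of ℤ/2. -/
abbrev G : Type := PresentedGroup rels

def A : G := PresentedGroup.of 0
def B : G := PresentedGroup.of 1
def C : G := PresentedGroup.of 2

/-- The distinguished element `D = C·B·A`. -/
def D : G := C * B * A
/-! ### Basic facts in `G` -/

lemma sq_one (i : Fin 3) :
    (PresentedGroup.of (rels := rels) i) * (PresentedGroup.of (rels := rels) i) = 1 := by
  have : (PresentedGroup.mk rels) (FreeGroup.of i * FreeGroup.of i) = 1 := by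
    apply (QuotientGroup.eq_one_iff _).mpr
    apply Subgroup.subset_normalClosure
    fin_cases i <;> simp [rels]
  rw [map_mul] at this; exact this

lemma hAA : A * A = 1 := sq_one 0
lemma hBB : B * B = 1 := sq_one 1
lemma hCC : C * C = 1 := sq_one 2
lemma hAinv : A⁻¹ = A := inv_eq_of_mul_eq_one_right hAA
lemma hBinv : B⁻¹ = B := inv_eq_of_mul_eq_one_right hBB
lemma hCinv : C⁻¹ = C := inv_eq_of_mul_eq_one_right hCC

lemma cancB (x : G) : B * (B * x) = x := by rw [← mul_assoc, hBB, one_mul]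

/-! ### Matrix representation -/

abbrev Mat : Type := Matrix (Fin 2) (Fin 2) ℤ

def MA : Mat := !![1, 2; 0, -1]
def MB : Mat := !![-1, 0; 0, 1]
def MC : Mat := !![-1, 0; 2, 1]
def MD : Mat := !![1, 2; -2, -5]
def MDi : Mat := !![5, 2; -2, -1]

lemma MA2 : MA * MA = 1 := by simp [MA, Matrix.mul_fin_two, Matrix.one_fin_two]
lemma MB2 : MB * MB = 1 := by simp [MB, Matrix.mul_fin_two, Matrix.one_fin_two]
lemma MC2 : MC * MC = 1 := by simp [MC, Matrix.mul_fin_two, Matrix.one_fin_two]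
lemma MDMDi : MD * MDi = 1 := by simp [MD, MDi, Matrix.mul_fin_two, Matrix.one_fin_two]
lemma MDiMD : MDi * MD = 1 := by simp [MD, MDi, Matrix.mul_fin_two, Matrix.one_fin_two]

def uA : Matˣ := ⟨MA, MA, MA2, MA2⟩
def uB : Matˣ := ⟨MB, MB, MB2, MB2⟩
def uC : Matˣ := ⟨MC, MC, MC2, MC2⟩
def uD : Matˣ := ⟨MD, MDi, MDMDi, MDiMD⟩
lemma uDinv : ((uD⁻¹ : Matˣ) : Mat) = MDi := rfl

noncomputable def ψ : G →* Matˣ :=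
  PresentedGroup.toGroup (f := fun i => if i = 0 then uA else if i = 1 then uB else uC)
    (by
      intro r hr
      rcases hr with h | h | h <;> subst h <;>
        simp [Units.ext_iff, MA2, MB2, MC2, uA, uB, uC])

lemma ψA : ψ A = uA := by simp [A, ψ, PresentedGroup.toGroup.of]
lemma ψB : ψ B = uB := by simp [B, ψ, PresentedGroup.toGroup.of]
lemma ψC : ψ C = uC := by simp [C, ψ, PresentedGroup.toGroup.of]
lemma ψD : ψ D = uD := by
  rw [D, map_mul, map_mul, ψA, ψB, ψC]
  ext : 1
  simp [uA, uB, uC, uD, Units.val_mul, MA, MB, MC, MD, Matrix.mul_fin_two]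

/-! ### Positivity structure -/

lemma mulent (M N : Mat) (i j : Fin 2) :
    (M * N) i j = M i 0 * N 0 j + M i 1 * N 1 j := by
  rw [Matrix.mul_apply, Fin.sum_univ_two]

def Pos (M : Mat) : Prop :=
  1 ≤ M 0 0 ∧ 0 ≤ M 0 1 ∧ 0 ≤ M 1 0 ∧ 1 ≤ M 1 1 ∧
    (M 0 1 = 0 → M 0 0 = 1 ∧ M 1 1 = 1) ∧ (M 1 0 = 0 → M 0 0 = 1 ∧ M 1 1 = 1)

lemma Pos_one : Pos 1 := by
  simp [Pos, Matrix.one_apply]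

lemma key_mul {a b c d a' b' c' d' : ℤ}
    (a1 : 1 ≤ a) (b0 : 0 ≤ b) (c0 : 0 ≤ c) (d1 : 1 ≤ d)
    (hb : b = 0 → a = 1 ∧ d = 1) (hc : c = 0 → a = 1 ∧ d = 1)
    (a1' : 1 ≤ a') (b0' : 0 ≤ b') (c0' : 0 ≤ c') (d1' : 1 ≤ d')
    (hb' : b' = 0 → a' = 1 ∧ d' = 1) (hc' : c' = 0 → a' = 1 ∧ d' = 1) :
    1 ≤ a * a' + b * c' ∧ 0 ≤ a * b' + b * d' ∧ 0 ≤ c * a' + d * c' ∧ 1 ≤ c * b' + d * d' ∧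
      (a * b' + b * d' = 0 → a * a' + b * c' = 1 ∧ c * b' + d * d' = 1) ∧
      (c * a' + d * c' = 0 → a * a' + b * c' = 1 ∧ c * b' + d * d' = 1) := by
  have hbc' : 0 ≤ b * c' := mul_nonneg b0 c0'
  have hab' : 0 ≤ a * b' := mul_nonneg (by linarith) b0'
  have hbd' : 0 ≤ b * d' := mul_nonneg b0 (by linarith)
  have hca' : 0 ≤ c * a' := mul_nonneg c0 (by linarith)
  have hdc' : 0 ≤ d * c' := mul_nonneg (by linarith) c0'
  have hcb' : 0 ≤ c * b' := mul_nonneg c0 b0'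
  have haa' : 1 ≤ a * a' := by nlinarith
  have hdd' : 1 ≤ d * d' := by nlinarith
  refine ⟨by linarith, by linarith, by linarith, by linarith, ?_, ?_⟩
  · intro h
    have h1 : a * b' = 0 := by linarith
    have h2 : b * d' = 0 := by linarith
    have hb'0 : b' = 0 := by
      rcases mul_eq_zero.mp h1 with h' | h'
      · omega
      · exact h'
    have hb0 : b = 0 := by
      rcases mul_eq_zero.mp h2 with h' | h'
      · exact h'
      · omega
    obtain ⟨e1, e2⟩ := hb hb0
    obtain ⟨e3, e4⟩ := hb' hb'0
    subst e1 e2 e3 e4 hb0 hb'0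
    constructor <;> ring
  · intro h
    have h1 : c * a' = 0 := by linarith
    have h2 : d * c' = 0 := by linarith
    have hc0 : c = 0 := by
      rcases mul_eq_zero.mp h1 with h' | h'
      · exact h'
      · omega
    have hc'0 : c' = 0 := by
      rcases mul_eq_zero.mp h2 with h' | h'
      · omega
      · exact h'
    obtain ⟨e1, e2⟩ := hc hc0
    obtain ⟨e3, e4⟩ := hc' hc'0
    subst e1 e2 e3 e4 hc0 hc'0
    constructor <;> ring

lemma Pos_mul {M N : Mat} (hM : Pos M) (hN : Pos N) : Pos (M * N) := by
  obtain ⟨a1, b0, c0, d1, hb, hc⟩ := hM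
  obtain ⟨a1', b0', c0', d1', hb', hc'⟩ := hN
  obtain ⟨k1, k2, k3, k4, k5, k6⟩ := key_mul a1 b0 c0 d1 hb hc a1' b0' c0' d1' hb' hc'
  exact ⟨by rw [mulent]; exact k1, by rw [mulent]; exact k2, by rw [mulent]; exact k3,
    by rw [mulent]; exact k4,
    by rw [mulent, mulent, mulent]; exact k5, by rw [mulent, mulent, mulent]; exact k6⟩

def Mgood (M : Mat) : Prop := Pos M ∨ Pos (-M)

lemma Mgood_one : Mgood 1 := Or.inl Pos_one

lemma Pos_neg_mul {M N : Mat} : Pos (-M) → Pos (-N) → Pos (M * N) := by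
  intro h1 h2
  have := Pos_mul h1 h2
  simpa [neg_mul_neg] using this

lemma Mgood_mul {M N : Mat} (hM : Mgood M) (hN : Mgood N) : Mgood (M * N) := by
  rcases hM with h1 | h1 <;> rcases hN with h2 | h2
  · exact Or.inl (Pos_mul h1 h2)
  · refine Or.inr ?_
    have := Pos_mul h1 h2
    simpa [mul_neg] using this
  · refine Or.inr ?_
    have := Pos_mul h1 h2
    simpa [neg_mul] using this
  · exact Or.inl (Pos_neg_mul h1 h2)

/-! ### Cone lemmas -/

lemma stepP (α β γ : ℤ) : MD * !![α, β; γ, -α] * MDi =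
    - !![2*β-9*α-10*γ, β-4*α-4*γ; 20*α-4*β+25*γ, -(2*β-9*α-10*γ)] := by
  ext i j
  fin_cases i <;> fin_cases j <;> simp [MD, MDi, Matrix.mul_fin_two] <;> ring

lemma stepM (α β γ : ℤ) : MDi * !![α, β; γ, -α] * MD =
    - !![10*β-9*α-2*γ, 25*β-20*α-4*γ; 4*α-4*β+γ, -(10*β-9*α-2*γ)] := by
  ext i j
  fin_cases i <;> fin_cases j <;> simp [MD, MDi, Matrix.mul_fin_two] <;> ring

lemma conj_succ (u X : Matˣ) (s : ℕ) :
    ((u ^ (s+1) * X * (u ^ (s+1))⁻¹ : Matˣ) : Mat) =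
      (u : Mat) * ((u ^ s * X * (u ^ s)⁻¹ : Matˣ) : Mat) * ((u⁻¹ : Matˣ) : Mat) := by
  have : (u ^ (s+1) * X * (u ^ (s+1))⁻¹ : Matˣ) = u * (u ^ s * X * (u ^ s)⁻¹) * u⁻¹ := by
    rw [pow_succ']
    group
  rw [this, Units.val_mul, Units.val_mul]

lemma coneP (s : ℕ) (hs : 1 ≤ s) (X : Matˣ) (hX : X = uA ∨ X = uB ∨ X = uC) :
    ∃ α β γ : ℤ, 1 ≤ α ∧ 1 ≤ β ∧ γ ≤ -α ∧
      (((uD ^ s * X * (uD ^ s)⁻¹ : Matˣ) : Mat) = !![α, β; γ, -α] ∨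
       ((uD ^ s * X * (uD ^ s)⁻¹ : Matˣ) : Mat) = -!![α, β; γ, -α]) := by
  induction s, hs using Nat.le_induction with
  | base =>
      have hval : ∀ Y : Matˣ, ((uD ^ 1 * Y * (uD ^ 1)⁻¹ : Matˣ) : Mat) = MD * (Y : Mat) * MDi := by
        intro Y
        rw [pow_one, Units.val_mul, Units.val_mul, uDinv]
        rfl
      rcases hX with h | h | h <;> subst h
      · exact ⟨5, 2, -12, by norm_num, by norm_num, by norm_num, Or.inl (by
          rw [hval]
          show MD * MA * MDi = _
          simp [MD, MA, MDi, Matrix.mul_fin_two])⟩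
      · exact ⟨9, 4, -20, by norm_num, by norm_num, by norm_num, Or.inr (by
          rw [hval]
          show MD * MB * MDi = _
          ext i j
          fin_cases i <;> fin_cases j <;> simp [MD, MB, MDi, Matrix.mul_fin_two])⟩
      · exact ⟨11, 4, -30, by norm_num, by norm_num, by norm_num, Or.inl (by
          rw [hval]
          show MD * MC * MDi = _
          simp [MD, MC, MDi, Matrix.mul_fin_two])⟩
  | succ s hs ih =>
      obtain ⟨α, β, γ, hα, hβ, hγ, hor⟩ := ih
      refine ⟨2*β-9*α-10*γ, β-4*α-4*γ, 20*α-4*β+25*γ, by linarith, by linarith, by linarith, ?_⟩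
      rw [conj_succ]
      rcases hor with h | h <;> rw [h]
      · right
        show MD * _ * MDi = _
        rw [stepP]
      · left
        show MD * -_ * MDi = _
        rw [mul_neg, neg_mul, stepP, neg_neg]

lemma coneM (s : ℕ) (hs : 1 ≤ s) (X : Matˣ) (hX : X = uA ∨ X = uB ∨ X = uC) :
    ∃ α β γ : ℤ, 1 ≤ α ∧ 2*α ≤ β ∧ γ ≤ -1 ∧
      (((uD⁻¹ ^ s * X * (uD⁻¹ ^ s)⁻¹ : Matˣ) : Mat) = !![α, β; γ, -α] ∨
       ((uD⁻¹ ^ s * X * (uD⁻¹ ^ s)⁻¹ : Matˣ) : Mat) = -!![α, β; γ, -α]) := by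
  have hval1 : ((uD⁻¹ : Matˣ)⁻¹ : Matˣ) = uD := by rw [inv_inv]
  induction s, hs using Nat.le_induction with
  | base =>
      have hval : ∀ Y : Matˣ,
          ((uD⁻¹ ^ 1 * Y * (uD⁻¹ ^ 1)⁻¹ : Matˣ) : Mat) = MDi * (Y : Mat) * MD := by
        intro Y
        rw [pow_one, Units.val_mul, Units.val_mul, inv_inv]
        rfl
      rcases hX with h | h | h <;> subst h
      · exact ⟨11, 30, -4, by norm_num, by norm_num, by norm_num, Or.inr (by
          rw [hval]
          show MDi * MA * MD = _
          ext i j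
          fin_cases i <;> fin_cases j <;> simp [MD, MA, MDi, Matrix.mul_fin_two])⟩
      · exact ⟨9, 20, -4, by norm_num, by norm_num, by norm_num, Or.inr (by
          rw [hval]
          show MDi * MB * MD = _
          ext i j
          fin_cases i <;> fin_cases j <;> simp [MD, MB, MDi, Matrix.mul_fin_two])⟩
      · exact ⟨5, 12, -2, by norm_num, by norm_num, by norm_num, Or.inr (by
          rw [hval]
          show MDi * MC * MD = _
          ext i j
          fin_cases i <;> fin_cases j <;> simp [MD, MC, MDi, Matrix.mul_fin_two])⟩
  | succ s hs ih =>
      obtain ⟨α, β, γ, hα, hβ, hγ, hor⟩ := ih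
      refine ⟨10*β-9*α-2*γ, 25*β-20*α-4*γ, 4*α-4*β+γ, by linarith, by linarith, by linarith, ?_⟩
      have := conj_succ uD⁻¹ X s
      rw [hval1] at this
      rw [this]
      rcases hor with h | h <;> rw [h]
      · right
        show MDi * _ * MD = _
        rw [stepM]
      · left
        show MDi * -_ * MD = _
        rw [mul_neg, neg_mul, stepM, neg_neg]

/-! ### Separation lemmas -/

lemma m00 (p q r s : ℤ) : (!![p, q; r, s] : Mat) 0 0 = p := by norm_num
lemma m01 (p q r s : ℤ) : (!![p, q; r, s] : Mat) 0 1 = q := by norm_num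
lemma m10 (p q r s : ℤ) : (!![p, q; r, s] : Mat) 1 0 = r := by norm_num
lemma m11 (p q r s : ℤ) : (!![p, q; r, s] : Mat) 1 1 = s := by norm_num

lemma neg_ent (M : Mat) (i j : Fin 2) : (-M) i j = -(M i j) := by simp

lemma Mgood_info {M : Mat} (hg : Mgood M) :
    (1 ≤ M 0 0 ∧ 0 ≤ M 0 1 ∧ 0 ≤ M 1 0 ∧ 1 ≤ M 1 1 ∧
      (M 0 1 = 0 → M 0 0 = 1 ∧ M 1 1 = 1)) ∨
    (M 0 0 ≤ -1 ∧ M 0 1 ≤ 0 ∧ M 1 0 ≤ 0 ∧ M 1 1 ≤ -1 ∧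
      (M 0 1 = 0 → M 0 0 = -1 ∧ M 1 1 = -1)) := by
  rcases hg with h | h
  · exact Or.inl ⟨h.1, h.2.1, h.2.2.1, h.2.2.2.1, h.2.2.2.2.1⟩
  · right
    obtain ⟨h1, h2, h3, h4, h5, _⟩ := h
    rw [neg_ent] at h1 h2 h3 h4
    refine ⟨by omega, by omega, by omega, by omega, ?_⟩
    intro hb
    have := h5 (by rw [neg_ent, hb, neg_zero])
    rw [neg_ent, neg_ent] at this
    omega

lemma sep (Vm : Matˣ) (hg : Mgood (Vm : Mat))
    (hNE : (Vm : Mat) 0 1 ≠ 0 ∨ (Vm : Mat) 1 0 ≠ 0)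
    (t : ℤ) (X : Matˣ) (hX : X = uA ∨ X = uB ∨ X = uC) :
    (Vm * uB : Matˣ) ≠ uD ^ t * X * (uD ^ t)⁻¹ := by
  intro h
  have hval : (Vm : Mat) * MB = ((uD ^ t * X * (uD ^ t)⁻¹ : Matˣ) : Mat) := by
    rw [← h, Units.val_mul]; rfl
  set a := (Vm : Mat) 0 0 with ha
  set b := (Vm : Mat) 0 1 with hb
  set c := (Vm : Mat) 1 0 with hc
  set d := (Vm : Mat) 1 1 with hd
  have l00 : ((Vm : Mat) * MB) 0 0 = -a := by rw [mulent]; norm_num [MB] <;> rfl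
  have l01 : ((Vm : Mat) * MB) 0 1 = b := by rw [mulent]; norm_num [MB] <;> rfl
  have l10 : ((Vm : Mat) * MB) 1 0 = -c := by rw [mulent]; norm_num [MB] <;> rfl
  have hinfo := Mgood_info hg
  rw [← ha, ← hb, ← hc, ← hd] at hinfo
  rcases lt_trichotomy t 0 with ht | ht | ht
  · -- t < 0 : coneM
    set s : ℕ := (-t).toNat with hsdef
    have hs1 : 1 ≤ s := by omega
    have hpow : (uD ^ t : Matˣ) = uD⁻¹ ^ s := by
      have hts : t = -(s : ℤ) := by omega
      rw [hts, zpow_neg, ← inv_zpow, zpow_natCast]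
    obtain ⟨α, β, γ, hα, hβ, hγ, hor⟩ := coneM s hs1 X hX
    rw [hpow] at hval
    rcases hor with h' | h' <;> rw [h'] at hval
    · have e00 : -a = α := by rw [← l00, hval, m00]
      have e01 : b = β := by rw [← l01, hval, m01]
      rcases hinfo with ⟨p1, p2, _⟩ | ⟨p1, p2, _⟩ <;> omega
    · have e00 : -a = -α := by rw [← l00, hval, neg_ent, m00]
      have e01 : b = -β := by rw [← l01, hval, neg_ent, m01]
      rcases hinfo with ⟨p1, p2, _⟩ | ⟨p1, p2, _⟩ <;> omega
  · -- t = 0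
    subst ht
    have hX0 : (uD ^ (0:ℤ) * X * (uD ^ (0:ℤ))⁻¹ : Matˣ) = X := by simp
    rw [hX0] at hval
    rcases hX with h' | h' | h' <;> subst h'
    · have e00 : -a = 1 := by rw [← l00, hval]; show (MA : Mat) 0 0 = 1; norm_num [MA]
      have e01 : b = 2 := by rw [← l01, hval]; show (MA : Mat) 0 1 = 2; norm_num [MA]
      rcases hinfo with ⟨p1, p2, _⟩ | ⟨p1, p2, _⟩ <;> omega
    · have e01 : b = 0 := by rw [← l01, hval]; show (MB : Mat) 0 1 = 0; norm_num [MB]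
      have e10 : -c = 0 := by rw [← l10, hval]; show (MB : Mat) 1 0 = 0; norm_num [MB]
      rcases hNE with h'' | h'' <;> omega
    · have e00 : -a = -1 := by rw [← l00, hval]; show (MC : Mat) 0 0 = -1; norm_num [MC]
      have e01 : b = 0 := by rw [← l01, hval]; show (MC : Mat) 0 1 = 0; norm_num [MC]
      have e10 : -c = 2 := by rw [← l10, hval]; show (MC : Mat) 1 0 = 2; norm_num [MC]
      rcases hinfo with ⟨p1, p2, p3, p4, p5⟩ | ⟨p1, p2, p3, p4, p5⟩
      · omega
      · have := p5 e01; omega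
  · -- t > 0 : coneP
    set s : ℕ := t.toNat with hsdef
    have hs1 : 1 ≤ s := by omega
    have hpow : (uD ^ t : Matˣ) = uD ^ s := by
      have hts : t = (s : ℤ) := by omega
      rw [hts, zpow_natCast]
    obtain ⟨α, β, γ, hα, hβ, hγ, hor⟩ := coneP s hs1 X hX
    rw [hpow] at hval
    rcases hor with h' | h' <;> rw [h'] at hval
    · have e00 : -a = α := by rw [← l00, hval, m00]
      have e01 : b = β := by rw [← l01, hval, m01]
      rcases hinfo with ⟨p1, p2, _⟩ | ⟨p1, p2, _⟩ <;> omega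
    · have e00 : -a = -α := by rw [← l00, hval, neg_ent, m00]
      have e01 : b = -β := by rw [← l01, hval, neg_ent, m01]
      rcases hinfo with ⟨p1, p2, _⟩ | ⟨p1, p2, _⟩ <;> omega

lemma uP_inj (t : ℤ) (X Y : Matˣ) (hX : X = uA ∨ X = uB ∨ X = uC)
    (h : (uD ^ t * X * (uD ^ t)⁻¹ : Matˣ) = Y) (hY : Y = uA ∨ Y = uB ∨ Y = uC) :
    t = 0 ∧ X = Y := by
  rcases lt_trichotomy t 0 with ht | ht | ht
  · exfalso
    set s : ℕ := (-t).toNat with hsdef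
    have hs1 : 1 ≤ s := by omega
    have hpow : (uD ^ t : Matˣ) = uD⁻¹ ^ s := by
      have hts : t = -(s : ℤ) := by omega
      rw [hts, zpow_neg, ← inv_zpow, zpow_natCast]
    obtain ⟨α, β, γ, hα, hβ, hγ, hor⟩ := coneM s hs1 X hX
    rw [hpow] at h
    have hval : ((uD⁻¹ ^ s * X * (uD⁻¹ ^ s)⁻¹ : Matˣ) : Mat) = (Y : Mat) := by rw [h]
    have hβ1 : 1 ≤ β := by omega
    rcases hor with h' | h' <;> rw [h'] at hval <;> rcases hY with h'' | h'' | h'' <;> subst h''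
    · have e10 : γ = 0 := by rw [← m10 α β γ (-α), hval]; show (MA : Mat) 1 0 = 0; norm_num [MA]
      omega
    · have e10 : γ = 0 := by rw [← m10 α β γ (-α), hval]; show (MB : Mat) 1 0 = 0; norm_num [MB]
      omega
    · have e10 : γ = 2 := by rw [← m10 α β γ (-α), hval]; show (MC : Mat) 1 0 = 2; norm_num [MC]
      omega
    · have e10 : -γ = 0 := by
        rw [← m10 α β γ (-α), ← neg_ent, hval]; show (MA : Mat) 1 0 = 0; norm_num [MA]
      omega
    · have e10 : -γ = 0 := by
        rw [← m10 α β γ (-α), ← neg_ent, hval]; show (MB : Mat) 1 0 = 0; norm_num [MB]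
      omega
    · have e01 : -β = 0 := by
        rw [← m01 α β γ (-α), ← neg_ent, hval]; show (MC : Mat) 0 1 = 0; norm_num [MC]
      omega
  · subst ht
    simp only [zpow_zero, one_mul, inv_one, mul_one] at h
    exact ⟨rfl, h⟩
  · exfalso
    set s : ℕ := t.toNat with hsdef
    have hs1 : 1 ≤ s := by omega
    have hpow : (uD ^ t : Matˣ) = uD ^ s := by
      have hts : t = (s : ℤ) := by omega
      rw [hts, zpow_natCast]
    obtain ⟨α, β, γ, hα, hβ, hγ, hor⟩ := coneP s hs1 X hX
    rw [hpow] at h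
    have hval : ((uD ^ s * X * (uD ^ s)⁻¹ : Matˣ) : Mat) = (Y : Mat) := by rw [h]
    have hγ1 : γ ≤ -1 := by omega
    rcases hor with h' | h' <;> rw [h'] at hval <;> rcases hY with h'' | h'' | h'' <;> subst h''
    · have e10 : γ = 0 := by rw [← m10 α β γ (-α), hval]; show (MA : Mat) 1 0 = 0; norm_num [MA]
      omega
    · have e10 : γ = 0 := by rw [← m10 α β γ (-α), hval]; show (MB : Mat) 1 0 = 0; norm_num [MB]
      omega
    · have e10 : γ = 2 := by rw [← m10 α β γ (-α), hval]; show (MC : Mat) 1 0 = 2; norm_num [MC]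
      omega
    · have e10 : -γ = 0 := by
        rw [← m10 α β γ (-α), ← neg_ent, hval]; show (MA : Mat) 1 0 = 0; norm_num [MA]
      omega
    · have e10 : -γ = 0 := by
        rw [← m10 α β γ (-α), ← neg_ent, hval]; show (MB : Mat) 1 0 = 0; norm_num [MB]
      omega
    · have e01 : -β = 0 := by
        rw [← m01 α β γ (-α), ← neg_ent, hval]; show (MC : Mat) 0 1 = 0; norm_num [MC]
      omega

/-! ### G-level algebra -/

lemma conj_image (φ : MulAut G) (hφD : φ D = D) {X Y : G} (hXY : φ X = Y) (m : ℤ) :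
    φ (D ^ m * X * (D ^ m)⁻¹) = D ^ m * Y * (D ^ m)⁻¹ := by
  rw [map_mul, map_mul, map_inv, map_zpow, hφD, hXY]

lemma conj_shift {w x : G} (t s : ℤ) (h : D ^ t * w * (D ^ t)⁻¹ = D ^ s * x * (D ^ s)⁻¹) :
    w = D ^ (s - t) * x * (D ^ (s - t))⁻¹ := by
  have h2 : D ^ (s - t) * x * (D ^ (s - t))⁻¹ = (D ^ t)⁻¹ * (D ^ s * x * (D ^ s)⁻¹) * D ^ t := by
    rw [zpow_sub]
    group
  rw [h2, ← h]
  group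

def Sgen : Set G := {B * A, B * C}

variable {R L : MulAut G}

lemma RD (hRA : R A = A) (hRB : R B = B * C * B⁻¹) (hRC : R C = B) : R D = D := by
  rw [D, map_mul, map_mul, hRA, hRB, hRC, hBinv]
  rw [mul_assoc B C B, cancB]

lemma LD (hLA : L A = B) (hLB : L B = B * A * B⁻¹) (hLC : L C = C) : L D = D := by
  rw [D, map_mul, map_mul, hLA, hLB, hLC]
  rw [mul_assoc C (B*A*B⁻¹) B, mul_assoc (B*A) B⁻¹ B, inv_mul_cancel, mul_one, ← mul_assoc]

lemma R_BA (hRA : R A = A) (hRB : R B = B * C * B⁻¹) : R (B * A) = (B * C) * (B * A) := by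
  rw [map_mul, hRA, hRB, hBinv, mul_assoc (B*C) B A]
lemma R_BC (hRB : R B = B * C * B⁻¹) (hRC : R C = B) : R (B * C) = B * C := by
  rw [map_mul, hRB, hRC, mul_assoc (B*C) B⁻¹ B, inv_mul_cancel, mul_one]
lemma R_B (hRB : R B = B * C * B⁻¹) : R B = (B * C) * B := by rw [hRB, hBinv]
lemma L_BA (hLA : L A = B) (hLB : L B = B * A * B⁻¹) : L (B * A) = B * A := by
  rw [map_mul, hLA, hLB, mul_assoc (B*A) B⁻¹ B, inv_mul_cancel, mul_one]
lemma L_BC (hLB : L B = B * A * B⁻¹) (hLC : L C = C) : L (B * C) = (B * A) * (B * C) := by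
  rw [map_mul, hLB, hLC, hBinv, mul_assoc (B*A) B C]
lemma L_B (hLB : L B = B * A * B⁻¹) : L B = (B * A) * B := by rw [hLB, hBinv]

lemma Rcl (hRA : R A = A) (hRB : R B = B * C * B⁻¹) (hRC : R C = B) :
    ∀ V ∈ Submonoid.closure Sgen, R V ∈ Submonoid.closure Sgen := by
  intro V hV
  induction hV using Submonoid.closure_induction with
  | mem x hx =>
      rcases hx with h | h <;> subst h
      · rw [R_BA hRA hRB]
        exact mul_mem (Submonoid.subset_closure (by right; rfl))
          (Submonoid.subset_closure (by left; rfl))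
      · rw [R_BC hRB hRC]
        exact Submonoid.subset_closure (by right; rfl)
  | one => rw [map_one]; exact Submonoid.one_mem _
  | mul x y _ _ hx hy => rw [map_mul]; exact mul_mem hx hy

lemma Lcl (hLA : L A = B) (hLB : L B = B * A * B⁻¹) (hLC : L C = C) :
    ∀ V ∈ Submonoid.closure Sgen, L V ∈ Submonoid.closure Sgen := by
  intro V hV
  induction hV using Submonoid.closure_induction with
  | mem x hx =>
      rcases hx with h | h <;> subst h
      · rw [L_BA hLA hLB]
        exact Submonoid.subset_closure (by left; rfl)
      · rw [L_BC hLB hLC]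
        exact mul_mem (Submonoid.subset_closure (by left; rfl))
          (Submonoid.subset_closure (by right; rfl))
  | one => rw [map_one]; exact Submonoid.one_mem _
  | mul x y _ _ hx hy => rw [map_mul]; exact mul_mem hx hy

/-! ### ψ-values on the monoid -/

lemma psiBA : ((ψ (B * A) : Matˣ) : Mat) = !![-1, -2; 0, -1] := by
  rw [map_mul, ψB, ψA, Units.val_mul]
  show MB * MA = _
  simp [MB, MA, Matrix.mul_fin_two]

lemma psiBC : ((ψ (B * C) : Matˣ) : Mat) = !![1, 0; 2, 1] := by
  rw [map_mul, ψB, ψC, Units.val_mul]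
  show MB * MC = _
  simp [MB, MC, Matrix.mul_fin_two]

lemma psiMgood : ∀ V ∈ Submonoid.closure Sgen, Mgood ((ψ V : Matˣ) : Mat) := by
  intro V hV
  induction hV using Submonoid.closure_induction with
  | mem x hx =>
      rcases hx with h | h <;> subst h
      · refine Or.inr ?_
        rw [psiBA]
        have hneg : -(!![(-1:ℤ), -2; 0, -1]) = !![1, 2; 0, 1] := by
          ext i j; fin_cases i <;> fin_cases j <;> simp
        rw [hneg]
        refine ⟨?_, ?_, ?_, ?_, ?_, ?_⟩ <;> norm_num
      · refine Or.inl ?_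
        rw [psiBC]
        refine ⟨?_, ?_, ?_, ?_, ?_, ?_⟩ <;> norm_num
  | one => rw [map_one]; exact Mgood_one
  | mul x y _ _ hx hy =>
      rw [map_mul, Units.val_mul]; exact Mgood_mul hx hy

lemma NE_mul_BC {M : Mat} (hg : Mgood M) : (M * (!![1, 0; 2, 1] : Mat)) 1 0 ≠ 0 := by
  have h := mulent M (!![1, 0; 2, 1] : Mat) 1 0
  rw [m00, m10] at h
  rcases Mgood_info hg with ⟨_, _, p3, p4, _⟩ | ⟨_, _, p3, p4, _⟩ <;> omega

lemma NE_mul_BA {M : Mat} (hg : Mgood M) : (M * (!![-1, -2; 0, -1] : Mat)) 0 1 ≠ 0 := by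
  have h := mulent M (!![-1, -2; 0, -1] : Mat) 0 1
  rw [m01, m11] at h
  rcases Mgood_info hg with ⟨p1, p2, _⟩ | ⟨p1, p2, _⟩ <;> omega

/-! ### The bad set -/

def Bad (w : G) : Prop :=
  ∃ (t : ℤ) (V : G), V ∈ Submonoid.closure Sgen ∧
    (((ψ V : Matˣ) : Mat) 0 1 ≠ 0 ∨ ((ψ V : Matˣ) : Mat) 1 0 ≠ 0) ∧
    w = D ^ t * (V * B) * (D ^ t)⁻¹

lemma BadR (hRA : R A = A) (hRB : R B = B * C * B⁻¹) (hRC : R C = B)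
    {w : G} (hw : Bad w) : Bad (R w) := by
  obtain ⟨t, V, hV, _, rfl⟩ := hw
  have hV' : R V * (B * C) ∈ Submonoid.closure Sgen :=
    mul_mem (Rcl hRA hRB hRC V hV) (Submonoid.subset_closure (by right; rfl))
  refine ⟨t, R V * (B * C), hV', Or.inr ?_, ?_⟩
  · rw [map_mul]
    rw [Units.val_mul]
    have : ((ψ (B * C) : Matˣ) : Mat) = !![1, 0; 2, 1] := psiBC
    rw [this]
    exact NE_mul_BC (psiMgood _ (Rcl hRA hRB hRC V hV))
  · have hVB : R (V * B) = R V * (B * C) * B := by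
      rw [map_mul, R_B hRB, ← mul_assoc]
    exact conj_image R (RD hRA hRB hRC) hVB t

lemma BadL (hLA : L A = B) (hLB : L B = B * A * B⁻¹) (hLC : L C = C)
    {w : G} (hw : Bad w) : Bad (L w) := by
  obtain ⟨t, V, hV, _, rfl⟩ := hw
  have hV' : L V * (B * A) ∈ Submonoid.closure Sgen :=
    mul_mem (Lcl hLA hLB hLC V hV) (Submonoid.subset_closure (by left; rfl))
  refine ⟨t, L V * (B * A), hV', Or.inl ?_, ?_⟩
  · rw [map_mul, Units.val_mul, psiBA]
    exact NE_mul_BA (psiMgood _ (Lcl hLA hLB hLC V hV))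
  · have hVB : L (V * B) = L V * (B * A) * B := by
      rw [map_mul, L_B hLB, ← mul_assoc]
    exact conj_image L (LD hLA hLB hLC) hVB t

lemma psi_gen {X : G} (hX : X = A ∨ X = B ∨ X = C) :
    ψ X = uA ∨ ψ X = uB ∨ ψ X = uC := by
  rcases hX with h | h | h <;> subst h
  · exact Or.inl ψA
  · exact Or.inr (Or.inl ψB)
  · exact Or.inr (Or.inr ψC)

lemma Bad_ne_conj {w : G} (hw : Bad w) (s : ℤ) {X : G} (hX : X = A ∨ X = B ∨ X = C) :
    w ≠ D ^ s * X * (D ^ s)⁻¹ := by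
  obtain ⟨t, V, hV, hNE, rfl⟩ := hw
  intro heq
  have hVB : V * B = D ^ (s - t) * X * (D ^ (s - t))⁻¹ := conj_shift t s heq
  have hψ : ψ V * uB = uD ^ (s - t) * ψ X * (uD ^ (s - t))⁻¹ := by
    have := congrArg ψ hVB
    rwa [map_mul, map_mul, map_mul, map_inv, map_zpow, ψB, ψD] at this
  exact sep (ψ V) (psiMgood V hV) hNE (s - t) (ψ X) (psi_gen hX) hψ

/-! ### Injectivity of the matrices of generators -/

lemma uAB : uA ≠ uB := by
  intro h
  have h2 : MA = MB := congrArg Units.val h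
  have := congrFun (congrFun h2 0) 1
  norm_num [MA, MB] at this

lemma uAC : uA ≠ uC := by
  intro h
  have h2 : MA = MC := congrArg Units.val h
  have := congrFun (congrFun h2 0) 1
  norm_num [MA, MC] at this

lemma uBC : uB ≠ uC := by
  intro h
  have h2 : MB = MC := congrArg Units.val h
  have := congrFun (congrFun h2 1) 0
  norm_num [MB, MC] at this

/-- Q_{m,n} = Q_{m',n'} iff (m,n) and (m',n') are equivalent under the equivalence
relation generated by the elementary relations coming from f. -/
theorem stmt12
    (R L : MulAut G)
    (hRA : R A = A) (hRB : R B = B * C * B⁻¹) (hRC : R C = B)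
    (hLA : L A = B) (hLB : L B = B * A * B⁻¹) (hLC : L C = C)
    (P : ℤ → G)
    (hP0 : ∀ m : ℤ, P (3 * m) = D ^ m * A * (D ^ m)⁻¹)
    (hP1 : ∀ m : ℤ, P (3 * m + 1) = D ^ m * B * (D ^ m)⁻¹)
    (hP2 : ∀ m : ℤ, P (3 * m + 2) = D ^ m * C * (D ^ m)⁻¹)
    (p : ℤ) (hp : 2 ≤ p)
    (f : ℤ → MulAut G) (hfRL : ∀ n : ℤ, f n = R ∨ f n = L)
    (hfper : ∀ n : ℤ, f (n + p) = f n) (hf0 : f 0 = L) (hf1 : f 1 = R)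
    (F : ℤ → MulAut G) (hF0 : F 0 = 1) (hF : ∀ n : ℤ, F n = F (n - 1) * f n)
    (Q : ℤ → ℤ → G) (hQ : ∀ m n : ℤ, Q m n = F (n - 1) (P m)) :
    ∀ x y : ℤ × ℤ, Q x.1 x.2 = Q y.1 y.2 ↔
      Relation.EqvGen
        (fun u v : ℤ × ℤ => ∃ m n : ℤ,
          (f n = R ∧ ((u = (3 * m, n) ∧ v = (3 * m, n + 1)) ∨
            (u = (3 * m + 1, n) ∧ v = (3 * m + 2, n + 1)))) ∨
          (f n = L ∧ ((u = (3 * m + 1, n) ∧ v = (3 * m, n + 1)) ∨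
            (u = (3 * m + 2, n) ∧ v = (3 * m + 2, n + 1)))))
        x y := by
  have hRD : R D = D := RD hRA hRB hRC
  have hLD : L D = D := LD hLA hLB hLC
  -- canonical form of P
  have hPform : ∀ w : ℤ, ∃ X : G,
      ((w % 3 = 0 ∧ X = A) ∨ (w % 3 = 1 ∧ X = B) ∨ (w % 3 = 2 ∧ X = C)) ∧
      P w = D ^ (w / 3) * X * (D ^ (w / 3))⁻¹ := by
    intro w
    have h3 : 3 * (w / 3) + w % 3 = w := Int.mul_ediv_add_emod w 3
    have hr : w % 3 = 0 ∨ w % 3 = 1 ∨ w % 3 = 2 := by omega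
    rcases hr with h' | h' | h'
    · exact ⟨A, Or.inl ⟨h', rfl⟩, by rw [← hP0 (w / 3)]; congr 1; omega⟩
    · exact ⟨B, Or.inr (Or.inl ⟨h', rfl⟩), by rw [← hP1 (w / 3)]; congr 1; omega⟩
    · exact ⟨C, Or.inr (Or.inr ⟨h', rfl⟩), by rw [← hP2 (w / 3)]; congr 1; omega⟩
  -- injectivity of P
  have Pinj : ∀ {j k : ℤ}, P j = P k → j = k := by
    intro j k h
    obtain ⟨X, hlX, hfX⟩ := hPform j
    obtain ⟨Y, hlY, hfY⟩ := hPform k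
    have hX3 : X = A ∨ X = B ∨ X = C := by
      rcases hlX with ⟨_, h'⟩ | ⟨_, h'⟩ | ⟨_, h'⟩
      exacts [Or.inl h', Or.inr (Or.inl h'), Or.inr (Or.inr h')]
    have hY3 : Y = A ∨ Y = B ∨ Y = C := by
      rcases hlY with ⟨_, h'⟩ | ⟨_, h'⟩ | ⟨_, h'⟩
      exacts [Or.inl h', Or.inr (Or.inl h'), Or.inr (Or.inr h')]
    rw [hfX, hfY] at h
    have hshift : X = D ^ (k / 3 - j / 3) * Y * (D ^ (k / 3 - j / 3))⁻¹ :=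
      conj_shift (j / 3) (k / 3) h
    have hψ : uD ^ (k / 3 - j / 3) * ψ Y * (uD ^ (k / 3 - j / 3))⁻¹ = ψ X := by
      have := congrArg ψ hshift
      rw [map_mul, map_mul, map_inv, map_zpow, ψD] at this
      exact this.symm
    obtain ⟨ht0, hXY⟩ := uP_inj (k / 3 - j / 3) (ψ Y) (ψ X) (psi_gen hY3) hψ (psi_gen hX3)
    have hdiv : j / 3 = k / 3 := by omega
    have h3j : 3 * (j / 3) + j % 3 = j := Int.mul_ediv_add_emod j 3
    have h3k : 3 * (k / 3) + k % 3 = k := Int.mul_ediv_add_emod k 3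
    -- conclude residues are equal
    rcases hlX with ⟨hrj, hX⟩ | ⟨hrj, hX⟩ | ⟨hrj, hX⟩ <;>
      rcases hlY with ⟨hrk, hY⟩ | ⟨hrk, hY⟩ | ⟨hrk, hY⟩ <;> subst hX <;> subst hY
    · omega
    · rw [ψB, ψA] at hXY; exact absurd hXY.symm uAB
    · rw [ψC, ψA] at hXY; exact absurd hXY.symm uAC
    · rw [ψA, ψB] at hXY; exact absurd hXY uAB
    · omega
    · rw [ψC, ψB] at hXY; exact absurd hXY.symm uBC
    · rw [ψA, ψC] at hXY; exact absurd hXY uAC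
    · rw [ψB, ψC] at hXY; exact absurd hXY uBC
    · omega
  -- one-sided hard direction
  have aux : ∀ (a na b nb : ℤ), na ≤ nb → F (na - 1) (P a) = F (nb - 1) (P b) →
      Relation.EqvGen
        (fun u v : ℤ × ℤ => ∃ m n : ℤ,
          (f n = R ∧ ((u = (3 * m, n) ∧ v = (3 * m, n + 1)) ∨
            (u = (3 * m + 1, n) ∧ v = (3 * m + 2, n + 1)))) ∨
          (f n = L ∧ ((u = (3 * m + 1, n) ∧ v = (3 * m, n + 1)) ∨
            (u = (3 * m + 2, n) ∧ v = (3 * m + 2, n + 1)))))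
        (a, na) (b, nb) := by
    intro a na b nb hle heq
    obtain ⟨g, hgdef⟩ : ∃ g : ℤ → G, ∀ j, g j = (F (j - 1))⁻¹ (F (nb - 1) (P b)) :=
      ⟨_, fun _ => rfl⟩
    have hgtop : g nb = P b := by
      rw [hgdef]
      exact MulAut.inv_apply_self G (F (nb - 1)) (P b)
    have hbot : g na = P a := by
      rw [hgdef, ← heq]
      exact MulAut.inv_apply_self G (F (na - 1)) (P a)
    have hstep : ∀ j : ℤ, g j = f j (g (j + 1)) := by
      intro j
      rw [hgdef, hgdef]
      have h1 : F (j + 1 - 1) = F (j - 1) * f j := by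
        rw [show j + 1 - 1 = j from by ring]
        exact hF j
      rw [h1, mul_inv_rev, MulAut.mul_apply, MulAut.apply_inv_self]
    -- the chain
    have chain : ∀ d : ℕ, na ≤ nb - (d : ℤ) →
        ((∃ k : ℤ, g (nb - (d : ℤ)) = P k ∧
          Relation.EqvGen
            (fun u v : ℤ × ℤ => ∃ m n : ℤ,
              (f n = R ∧ ((u = (3 * m, n) ∧ v = (3 * m, n + 1)) ∨
                (u = (3 * m + 1, n) ∧ v = (3 * m + 2, n + 1)))) ∨
              (f n = L ∧ ((u = (3 * m + 1, n) ∧ v = (3 * m, n + 1)) ∨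
                (u = (3 * m + 2, n) ∧ v = (3 * m + 2, n + 1)))))
            (k, nb - (d : ℤ)) (b, nb)) ∨ Bad (g (nb - (d : ℤ)))) := by
      intro d
      induction d with
      | zero =>
          intro _
          left
          refine ⟨b, ?_, ?_⟩
          · rw [show nb - ((0 : ℕ) : ℤ) = nb from by push_cast; ring]
            exact hgtop
          · rw [show nb - ((0 : ℕ) : ℤ) = nb from by push_cast; ring]
            exact Relation.EqvGen.refl _
      | succ d ih =>
          intro hled
          have hcast : ((d + 1 : ℕ) : ℤ) = (d : ℤ) + 1 := by push_cast; ring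
          rw [hcast] at hled ⊢
          have hled' : na ≤ nb - (d : ℤ) := by omega
          set j : ℤ := nb - ((d : ℤ) + 1) with hjdef
          have hj1 : j + 1 = nb - (d : ℤ) := by omega
          rcases ih hled' with ⟨k, hk, hEqv⟩ | hbad
          · -- previous element is P k
            obtain ⟨X, hlink, hform⟩ := hPform k
            have h3k : 3 * (k / 3) + k % 3 = k := Int.mul_ediv_add_emod k 3
            set t : ℤ := k / 3 with htdef
            have hgj : g j = f j (P k) := by rw [hstep j, hj1, hk]
            rcases hfRL j with hfj | hfj
            · -- f j = R
              rcases hlink with ⟨hr, hX⟩ | ⟨hr, hX⟩ | ⟨hr, hX⟩ <;> subst hX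
              · -- k ≡ 0 : stays P k
                have hk3t : k = 3 * t := by omega
                left
                refine ⟨k, ?_, ?_⟩
                · rw [hgj, hfj, hform, conj_image R hRD hRA, ← hform]
                · refine Relation.EqvGen.trans _ _ _
                    (Relation.EqvGen.rel (k, j) (k, j + 1)
                      ⟨t, j, Or.inl ⟨hfj, Or.inl ⟨by rw [hk3t], by rw [hk3t]⟩⟩⟩) ?_
                  rw [hj1]
                  exact hEqv
              · -- k ≡ 1 : becomes bad
                right
                have hgj2 : g j = D ^ t * ((B * C) * B) * (D ^ t)⁻¹ := by
                  rw [hgj, hfj, hform, conj_image R hRD (R_B hRB)]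
                exact ⟨t, B * C, Submonoid.subset_closure (by right; rfl),
                  Or.inr (by rw [psiBC, m10]; norm_num), hgj2⟩
              · -- k ≡ 2 : becomes P (3t+1)
                have hk3t : k = 3 * t + 2 := by omega
                left
                refine ⟨3 * t + 1, ?_, ?_⟩
                · rw [hgj, hfj, hform, conj_image R hRD hRC, ← hP1 t]
                · refine Relation.EqvGen.trans _ _ _
                    (Relation.EqvGen.rel (3 * t + 1, j) (k, j + 1)
                      ⟨t, j, Or.inl ⟨hfj, Or.inr ⟨rfl, by rw [hk3t]⟩⟩⟩) ?_
                  rw [hj1]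
                  exact hEqv
            · -- f j = L
              rcases hlink with ⟨hr, hX⟩ | ⟨hr, hX⟩ | ⟨hr, hX⟩ <;> subst hX
              · -- k ≡ 0 : becomes P (3t+1)
                have hk3t : k = 3 * t := by omega
                left
                refine ⟨3 * t + 1, ?_, ?_⟩
                · rw [hgj, hfj, hform, conj_image L hLD hLA, ← hP1 t]
                · refine Relation.EqvGen.trans _ _ _
                    (Relation.EqvGen.rel (3 * t + 1, j) (k, j + 1)
                      ⟨t, j, Or.inr ⟨hfj, Or.inl ⟨rfl, by rw [hk3t]⟩⟩⟩) ?_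
                  rw [hj1]
                  exact hEqv
              · -- k ≡ 1 : becomes bad
                right
                have hgj2 : g j = D ^ t * ((B * A) * B) * (D ^ t)⁻¹ := by
                  rw [hgj, hfj, hform, conj_image L hLD (L_B hLB)]
                exact ⟨t, B * A, Submonoid.subset_closure (by left; rfl),
                  Or.inl (by rw [psiBA, m01]; norm_num), hgj2⟩
              · -- k ≡ 2 : stays P k
                have hk3t : k = 3 * t + 2 := by omega
                left
                refine ⟨k, ?_, ?_⟩
                · rw [hgj, hfj, hform, conj_image L hLD hLC, ← hform]
                · refine Relation.EqvGen.trans _ _ _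
                    (Relation.EqvGen.rel (k, j) (k, j + 1)
                      ⟨t, j, Or.inr ⟨hfj, Or.inr ⟨by rw [hk3t], by rw [hk3t]⟩⟩⟩) ?_
                  rw [hj1]
                  exact hEqv
          · -- previous element is bad
            right
            rcases hfRL j with hfj | hfj
            · have h2 : g j = R (g (nb - (d : ℤ))) := by rw [hstep j, hfj, hj1]
              rw [h2]
              exact BadR hRA hRB hRC hbad
            · have h2 : g j = L (g (nb - (d : ℤ))) := by rw [hstep j, hfj, hj1]
              rw [h2]
              exact BadL hLA hLB hLC hbad
    -- conclude
    have hnn : nb - ((nb - na).toNat : ℤ) = na := by omega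
    have hfin := chain (nb - na).toNat (by omega)
    rw [hnn] at hfin
    rcases hfin with ⟨k, hk, hEqv⟩ | hbad
    · have hka : k = a := Pinj (by rw [← hk, hbot])
      subst hka
      exact hEqv
    · exfalso
      rw [hbot] at hbad
      obtain ⟨X, hlink, hform⟩ := hPform a
      have hX3 : X = A ∨ X = B ∨ X = C := by
        rcases hlink with ⟨_, h'⟩ | ⟨_, h'⟩ | ⟨_, h'⟩
        exacts [Or.inl h', Or.inr (Or.inl h'), Or.inr (Or.inr h')]
      exact Bad_ne_conj hbad (a / 3) hX3 hform
  -- main statement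
  intro x y
  constructor
  · intro hQeq
    rcases le_total x.2 y.2 with hle | hle
    · have := aux x.1 x.2 y.1 y.2 hle (by rw [← hQ, ← hQ]; exact hQeq)
      simpa using this
    · have := aux y.1 y.2 x.1 x.2 hle (by rw [← hQ, ← hQ]; exact hQeq.symm)
      have h2 := Relation.EqvGen.symm _ _ this
      simpa using h2
  · intro h
    induction h with
    | rel u v huv =>
        obtain ⟨mm, nn, hc⟩ := huv
        have hn1 : nn + 1 - 1 = nn := by ring
        rcases hc with ⟨hfn, hc⟩ | ⟨hfn, hc⟩ <;> rcases hc with ⟨hu, hv⟩ | ⟨hu, hv⟩ <;>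
          subst hu <;> subst hv <;> simp only [hQ] <;>
          rw [hn1, hF nn, MulAut.mul_apply, hfn] <;> apply congrArg
        · rw [hP0 mm, conj_image R hRD hRA]
        · rw [hP2 mm, conj_image R hRD hRC, ← hP1 mm]
        · rw [hP0 mm, conj_image L hLD hLA, ← hP1 mm]
        · rw [hP2 mm, conj_image L hLD hLC]
    | refl a => rfl
    | symm a b _ ih => exact ih.symm
    | trans a b c _ _ ih1 ih2 => exact ih1.trans ih2
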